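/- Let d ≥ 1, ε > 0, and let f be a map from the set ℙ(ℂ^d) of rank-one orthogonal projections in ℂ^{d×d} to itself satisfying |Tr(f(x)f(y)) − Tr(xy)| ≤ ε for all x, y ∈ ℙ(ℂ^d). Then there exists a map F : H_d → H_d on the real vector space H_d of d×d complex Hermitian matrices such that F(p) = f(p) for every p ∈ ℙ(ℂ^d), F(λx) = λF(x) for all λ ∈ ℝ and x ∈ H_d, and for every m ∈ ℕ, x₁,…,x_m ∈ H_d and λ₁,…,λ_m ∈ ℝ: ‖Σᵢ λᵢF(xᵢ) − F(Σᵢ λᵢxᵢ)‖₂ ≤ 2√ε · Σᵢ |λᵢ|·‖xᵢ‖₁, where ‖·‖₂ is the Hilbert–Schmidt norm and ‖x‖₁ = Tr|x| is the trace norm. -/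

import Mathlib

open Finset Matrix

/-- The real vector space of `d × d` complex Hermitian matrices. -/
noncomputable abbrev HermMat (d : ℕ) := selfAdjoint (Matrix (Fin d) (Fin d) ℂ)

/-- The Hilbert–Schmidt inner product `⟨x, y⟩ = Tr (x y)` on Hermitian matrices. -/
noncomputable def hsInner {d : ℕ} (x y : HermMat d) : ℝ :=
  (((x : Matrix (Fin d) (Fin d) ℂ) * (y : Matrix (Fin d) (Fin d) ℂ)).trace).re

/-- The Hilbert–Schmidt norm `‖x‖₂ = (Tr x²)^{1/2}` on Hermitian matrices. -/
noncomputable def hsNorm {d : ℕ} (x : HermMat d) : ℝ :=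
  Real.sqrt (hsInner x x)

/-- The set of rank-one orthogonal projections in `ℂ^{d×d}`, viewed inside the
Hermitian matrices. -/
def rankOneProjSet (d : ℕ) : Set (HermMat d) :=
  { p | ∃ v : EuclideanSpace ℂ (Fin d), ‖v‖ = 1 ∧
    (p : Matrix (Fin d) (Fin d) ℂ) = Matrix.of fun i j => v i * star (v j) }

/-- The trace norm `‖x‖₁ = Tr |x|` of a Hermitian matrix: the sum of the
absolute values of its eigenvalues. -/
noncomputable def trNorm {d : ℕ} (x : HermMat d) : ℝ :=
  ∑ i, |(Matrix.IsHermitian.eigenvalues x.2 i)|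

namespace Stmt18Aux
variable {d : ℕ}

noncomputable def KIP (a b : Matrix (Fin d) (Fin d) ℂ) : ℝ := ((a*b).trace).re

def mkP (v : EuclideanSpace ℂ (Fin d)) : Matrix (Fin d) (Fin d) ℂ :=
  Matrix.of fun i j => v i * star (v j)

lemma mkP_isSA (v : EuclideanSpace ℂ (Fin d)) : mkP v ∈ selfAdjoint (Matrix (Fin d) (Fin d) ℂ) := by
  have : (mkP v)ᴴ = mkP v := by
    ext i j
    simp [mkP, Matrix.conjTranspose_apply, mul_comm]
  exact this

noncomputable def mkPH (v : EuclideanSpace ℂ (Fin d)) : HermMat d := ⟨mkP v, mkP_isSA v⟩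

lemma mkPH_mem {v : EuclideanSpace ℂ (Fin d)} (hv : ‖v‖ = 1) : mkPH v ∈ rankOneProjSet d :=
  ⟨v, hv, rfl⟩

lemma mem_iff {p : HermMat d} :
    p ∈ rankOneProjSet d ↔ ∃ v : EuclideanSpace ℂ (Fin d), ‖v‖ = 1 ∧ p = mkPH v := by
  constructor
  · rintro ⟨v, hv, hp⟩
    exact ⟨v, hv, Subtype.ext hp⟩
  · rintro ⟨v, hv, rfl⟩
    exact mkPH_mem hv

lemma sum_normSq_eq_one {v : EuclideanSpace ℂ (Fin d)} (hv : ‖v‖ = 1) :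
    ∑ i, Complex.normSq (v i) = 1 := by
  have h : ‖v‖ ^ 2 = 1 := by rw [hv]; norm_num
  rw [EuclideanSpace.norm_eq] at h
  rw [Real.sq_sqrt (Finset.sum_nonneg fun i _ => sq_nonneg _)] at h
  rw [← h]
  refine Finset.sum_congr rfl fun i _ => ?_
  rw [← Complex.sq_norm]

lemma trace_mkP (v : EuclideanSpace ℂ (Fin d)) :
    (mkP v).trace = ((∑ i, Complex.normSq (v i) : ℝ) : ℂ) := by
  unfold mkP Matrix.trace
  push_cast
  refine Finset.sum_congr rfl fun i _ => ?_
  simpa using (Complex.mul_conj (v i))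

lemma trace_mul_eq (a b : Matrix (Fin d) (Fin d) ℂ) :
    (a * b).trace = ∑ i, ∑ j, a i j * b j i := by
  unfold Matrix.trace Matrix.diag
  refine Finset.sum_congr rfl fun i _ => ?_
  rw [Matrix.mul_apply]

lemma KIP_mkP (v w : EuclideanSpace ℂ (Fin d)) :
    KIP (mkP v) (mkP w) = Complex.normSq (∑ j, star (v j) * w j) := by
  unfold KIP
  rw [trace_mul_eq]
  have key : ∑ i, ∑ j, (mkP v) i j * (mkP w) j i
      = (∑ j, star (v j) * w j) * star (∑ j, star (v j) * w j) := by
    rw [star_sum, Finset.sum_mul_sum]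
    rw [Finset.sum_comm]
    refine Finset.sum_congr rfl fun i _ => Finset.sum_congr rfl fun j _ => ?_
    simp only [mkP, Matrix.of_apply, star_mul', star_star]
    ring
  rw [key, Complex.star_def, Complex.mul_conj]
  simp

lemma KIP_mkP_nonneg (v w : EuclideanSpace ℂ (Fin d)) : 0 ≤ KIP (mkP v) (mkP w) := by
  rw [KIP_mkP]; exact Complex.normSq_nonneg _

lemma KIP_mkP_self {v : EuclideanSpace ℂ (Fin d)} (hv : ‖v‖ = 1) : KIP (mkP v) (mkP v) = 1 := by
  rw [KIP_mkP]
  have : (∑ j, star (v j) * v j) = ((1:ℝ) : ℂ) := by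
    rw [← sum_normSq_eq_one hv]
    push_cast
    refine Finset.sum_congr rfl fun j _ => ?_
    rw [Complex.star_def, mul_comm, Complex.mul_conj]
  rw [this]
  simp

/- coercion lemmas -/
lemma coe_sum {ι : Type*} (s : Finset ι) (g : ι → HermMat d) :
    ((∑ i ∈ s, g i : HermMat d) : Matrix (Fin d) (Fin d) ℂ)
      = ∑ i ∈ s, (g i : Matrix (Fin d) (Fin d) ℂ) := by
  simp

lemma coe_smul (c : ℝ) (x : HermMat d) :
    ((c • x : HermMat d) : Matrix (Fin d) (Fin d) ℂ) = c • (x : Matrix (Fin d) (Fin d) ℂ) := rfl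

lemma hsInner_eq_KIP (x y : HermMat d) :
    hsInner x y = KIP (x : Matrix (Fin d) (Fin d) ℂ) (y : Matrix (Fin d) (Fin d) ℂ) := rfl

lemma KIP_comm (a b : Matrix (Fin d) (Fin d) ℂ) : KIP a b = KIP b a := by
  unfold KIP; rw [Matrix.trace_mul_comm]

lemma KIP_sum_left {ι : Type*} (s : Finset ι) (g : ι → Matrix (Fin d) (Fin d) ℂ)
    (b : Matrix (Fin d) (Fin d) ℂ) :
    KIP (∑ i ∈ s, g i) b = ∑ i ∈ s, KIP (g i) b := by
  unfold KIP
  rw [Finset.sum_mul, Matrix.trace_sum, Complex.re_sum]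

lemma KIP_smul_left (c : ℝ) (a b : Matrix (Fin d) (Fin d) ℂ) :
    KIP (c • a) b = c * KIP a b := by
  unfold KIP
  rw [Matrix.smul_mul, Matrix.trace_smul, Complex.real_smul, Complex.mul_re]
  simp

lemma KIP_sum_right {ι : Type*} (s : Finset ι) (g : ι → Matrix (Fin d) (Fin d) ℂ)
    (b : Matrix (Fin d) (Fin d) ℂ) :
    KIP b (∑ i ∈ s, g i) = ∑ i ∈ s, KIP b (g i) := by
  rw [KIP_comm, KIP_sum_left]
  exact Finset.sum_congr rfl fun i _ => KIP_comm _ _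

lemma KIP_smul_right (c : ℝ) (a b : Matrix (Fin d) (Fin d) ℂ) :
    KIP b (c • a) = c * KIP b a := by
  rw [KIP_comm, KIP_smul_left, KIP_comm]

lemma KIP_zero_left (b : Matrix (Fin d) (Fin d) ℂ) : KIP 0 b = 0 := by
  unfold KIP; simp

lemma KIP_one_right (a : Matrix (Fin d) (Fin d) ℂ) : KIP a 1 = (a.trace).re := by
  unfold KIP; rw [mul_one]

/- spectral data -/
noncomputable def evec (x : HermMat d) (j : Fin d) : EuclideanSpace ℂ (Fin d) :=
  Matrix.IsHermitian.eigenvectorBasis x.2 j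

noncomputable def muv (x : HermMat d) (j : Fin d) : ℝ :=
  Matrix.IsHermitian.eigenvalues x.2 j

noncomputable def Pj (x : HermMat d) (j : Fin d) : HermMat d := mkPH (evec x j)

lemma evec_norm (x : HermMat d) (j : Fin d) : ‖evec x j‖ = 1 :=
  (Matrix.IsHermitian.eigenvectorBasis x.2).orthonormal.1 j

lemma Pj_mem (x : HermMat d) (j : Fin d) : Pj x j ∈ rankOneProjSet d :=
  mkPH_mem (evec_norm x j)

lemma inner_evec (x : HermMat d) (j k : Fin d) :
    (inner ℂ (evec x j) (evec x k) : ℂ) = if j = k then 1 else 0 := by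
  have h := (Matrix.IsHermitian.eigenvectorBasis x.2).orthonormal
  rw [orthonormal_iff_ite] at h
  exact h j k

lemma inner_eq_sum (v w : EuclideanSpace ℂ (Fin d)) :
    (inner ℂ v w : ℂ) = ∑ j, star (v j) * w j := by
  simp [PiLp.inner_apply, RCLike.inner_apply]
  exact Finset.sum_congr rfl fun _ _ => mul_comm _ _

lemma spectral_decomp (x : HermMat d) :
    (x : Matrix (Fin d) (Fin d) ℂ)
      = ∑ j, (muv x j) • mkP (evec x j) := by
  have h := Matrix.IsHermitian.spectral_theorem x.2
  ext i l
  rw [congr_fun (congr_fun h i) l]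
  rw [Unitary.conjStarAlgAut_apply]
  rw [Matrix.mul_apply]
  rw [Matrix.sum_apply]
  refine Finset.sum_congr rfl fun k _ => ?_
  rw [Matrix.mul_diagonal, Matrix.star_apply, Matrix.smul_apply]
  simp only [Matrix.IsHermitian.eigenvectorUnitary_apply, mkP, Matrix.of_apply,
    Function.comp_apply, Complex.real_smul]
  unfold muv evec
  rw [mul_right_comm, mul_comm]
  rfl

lemma sum_mkP_evec (x : HermMat d) :
    ∑ j, mkP (evec x j) = (1 : Matrix (Fin d) (Fin d) ℂ) := by
  have h1 : (Matrix.IsHermitian.eigenvectorUnitary x.2 : Matrix (Fin d) (Fin d) ℂ)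
      * star (Matrix.IsHermitian.eigenvectorUnitary x.2 : Matrix (Fin d) (Fin d) ℂ) = 1 :=
    (Matrix.mem_unitaryGroup_iff).mp (Matrix.IsHermitian.eigenvectorUnitary x.2).2
  rw [← h1]
  ext i l
  rw [Matrix.sum_apply, Matrix.mul_apply]
  refine Finset.sum_congr rfl fun j _ => ?_
  rw [Matrix.star_apply]
  simp only [Matrix.IsHermitian.eigenvectorUnitary_apply, mkP, Matrix.of_apply]
  rfl

end Stmt18Aux
namespace Stmt18Aux
variable {d : ℕ}

lemma KIP_evec_evec (x y : HermMat d) (j k : Fin d) :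
    KIP (mkP (evec x j)) (mkP (evec y k))
      = Complex.normSq (inner ℂ (evec x j) (evec y k) : ℂ) := by
  rw [KIP_mkP, ← inner_eq_sum]

lemma KIP_Pj_Pj (x : HermMat d) (j k : Fin d) :
    KIP (mkP (evec x j)) (mkP (evec x k)) = if j = k then 1 else 0 := by
  rw [KIP_evec_evec, inner_evec]
  split <;> simp

lemma muv_eq (x : HermMat d) (k : Fin d) :
    KIP (x : Matrix (Fin d) (Fin d) ℂ) (mkP (evec x k)) = muv x k := by
  conv_lhs => rw [spectral_decomp x]
  rw [KIP_sum_left]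
  rw [Finset.sum_congr rfl fun j _ => KIP_smul_left (muv x j) _ _]
  rw [Finset.sum_congr rfl fun j (_ : j ∈ Finset.univ) => by rw [KIP_Pj_Pj x j k]]
  simp

noncomputable def trR (x : HermMat d) : ℝ := ((x : Matrix (Fin d) (Fin d) ℂ).trace).re

lemma trR_proj {p : HermMat d} (hp : p ∈ rankOneProjSet d) : trR p = 1 := by
  obtain ⟨v, hv, hp⟩ := hp
  unfold trR
  rw [hp]
  rw [show (Matrix.of fun i j => v i * star (v j)) = mkP v from rfl]
  rw [trace_mkP, sum_normSq_eq_one hv]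
  simp

lemma trR_smul (c : ℝ) (x : HermMat d) : trR (c • x) = c * trR x := by
  unfold trR
  rw [coe_smul, Matrix.trace_smul, Complex.real_smul, Complex.mul_re]
  simp

lemma trNorm_eq (x : HermMat d) : trNorm x = ∑ j, |muv x j| := rfl

lemma trNorm_nonneg (x : HermMat d) : 0 ≤ trNorm x :=
  Finset.sum_nonneg fun _ _ => abs_nonneg _

lemma trR_eq_sum (x : HermMat d) : trR x = ∑ j, muv x j := by
  unfold trR
  rw [spectral_decomp x, Matrix.trace_sum, Complex.re_sum]
  refine Finset.sum_congr rfl fun j _ => ?_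
  rw [Matrix.trace_smul, trace_mkP, sum_normSq_eq_one (evec_norm x j)]
  simp [Complex.real_smul]

lemma abs_trR_le (x : HermMat d) : |trR x| ≤ trNorm x := by
  rw [trR_eq_sum, trNorm_eq]
  exact Finset.abs_sum_le_sum_abs _ _

lemma proj_ne_zero {p : HermMat d} (hp : p ∈ rankOneProjSet d) : p ≠ 0 := by
  intro h
  have := trR_proj hp
  rw [h] at this
  unfold trR at this
  simp at this

/-- completeness: for any projection q, the overlaps with the eigenprojections of x sum to 1 -/
lemma sum_KIP_eigen {q : HermMat d} (hq : q ∈ rankOneProjSet d) (x : HermMat d) :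
    ∑ k, KIP (q : Matrix (Fin d) (Fin d) ℂ) (mkP (evec x k)) = 1 := by
  rw [← KIP_sum_right, sum_mkP_evec, KIP_one_right]
  exact trR_proj hq

lemma KIP_proj_nonneg {q r : HermMat d} (hq : q ∈ rankOneProjSet d)
    (hr : r ∈ rankOneProjSet d) :
    0 ≤ KIP (q : Matrix (Fin d) (Fin d) ℂ) (r : Matrix (Fin d) (Fin d) ℂ) := by
  obtain ⟨v, hv, hq⟩ := hq
  obtain ⟨w, hw, hr⟩ := hr
  rw [hq, hr]
  exact KIP_mkP_nonneg v w

lemma KIP_proj_mkP_nonneg {q : HermMat d} (hq : q ∈ rankOneProjSet d)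
    (v : EuclideanSpace ℂ (Fin d)) :
    0 ≤ KIP (q : Matrix (Fin d) (Fin d) ℂ) (mkP v) := by
  obtain ⟨u, hu, hq⟩ := hq
  rw [hq]
  exact KIP_mkP_nonneg u v

lemma trNorm_le_of_decomp {ι : Type*} [Fintype ι] (w : ι → ℝ) (r : ι → HermMat d)
    (hr : ∀ i, r i ∈ rankOneProjSet d) (x : HermMat d)
    (hx : ∑ i, w i • r i = x) : trNorm x ≤ ∑ i, |w i| := by
  rw [trNorm_eq]
  have hmu : ∀ k, muv x k = ∑ i, w i * KIP (r i : Matrix (Fin d) (Fin d) ℂ) (mkP (evec x k)) := by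
    intro k
    rw [← muv_eq]
    have hcoe : (x : Matrix (Fin d) (Fin d) ℂ) = ∑ i, w i • (r i : Matrix (Fin d) (Fin d) ℂ) := by
      rw [← hx, coe_sum]
      exact Finset.sum_congr rfl fun i _ => rfl
    rw [hcoe, KIP_sum_left]
    exact Finset.sum_congr rfl fun i _ => KIP_smul_left _ _ _
  calc ∑ k, |muv x k|
      ≤ ∑ k, ∑ i, |w i| * KIP (r i : Matrix (Fin d) (Fin d) ℂ) (mkP (evec x k)) := by
        refine Finset.sum_le_sum fun k _ => ?_
        rw [hmu k]
        refine (Finset.abs_sum_le_sum_abs _ _).trans ?_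
        refine Finset.sum_le_sum fun i _ => ?_
        rw [abs_mul]
        have h0 : (0:ℝ) ≤ KIP (r i : Matrix (Fin d) (Fin d) ℂ) (mkP (evec x k)) :=
          KIP_proj_mkP_nonneg (hr i) (evec x k)
        rw [abs_of_nonneg h0]
    _ = ∑ i, |w i| := by
        rw [Finset.sum_comm]
        refine Finset.sum_congr rfl fun i _ => ?_
        rw [← Finset.mul_sum, sum_KIP_eigen (hr i) x, mul_one]

end Stmt18Aux
namespace Stmt18Aux
variable {d : ℕ}

lemma KIP_combo {ι κ : Type*} [Fintype ι] [Fintype κ] (c : ι → ℝ) (w : κ → ℝ)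
    (u : ι → Matrix (Fin d) (Fin d) ℂ) (v : κ → Matrix (Fin d) (Fin d) ℂ) :
    KIP (∑ i, c i • u i) (∑ k, w k • v k)
      = ∑ i, ∑ k, (c i * w k) * KIP (u i) (v k) := by
  rw [KIP_sum_left]
  refine Finset.sum_congr rfl fun i _ => ?_
  rw [KIP_smul_left, KIP_sum_right, Finset.mul_sum]
  refine Finset.sum_congr rfl fun k _ => ?_
  rw [KIP_smul_right]
  ring

lemma coe_combo {ι : Type*} [Fintype ι] (c : ι → ℝ) (g : ι → HermMat d) :
    ((∑ i, c i • g i : HermMat d) : Matrix (Fin d) (Fin d) ℂ)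
      = ∑ i, c i • (g i : Matrix (Fin d) (Fin d) ℂ) := by
  rw [coe_sum]
  exact Finset.sum_congr rfl fun i _ => rfl

/-- The key approximate-orthogonality estimate. -/
lemma key_bound (ε : ℝ) (hε : 0 < ε) (f : HermMat d → HermMat d)
    (hsym : ∀ p ∈ rankOneProjSet d, ∀ q ∈ rankOneProjSet d,
      |hsInner (f p) (f q) - hsInner p q| ≤ ε)
    {ι : Type*} [Fintype ι] (c : ι → ℝ) (r : ι → HermMat d)
    (hr : ∀ i, r i ∈ rankOneProjSet d)
    (h0 : ∑ i, c i • r i = (0 : HermMat d)) :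
    hsNorm (∑ i, c i • f (r i)) ≤ Real.sqrt ε * ∑ i, |c i| := by
  have hM : hsInner (∑ i, c i • f (r i)) (∑ i, c i • f (r i))
      = ∑ i, ∑ k, (c i * c k) *
        KIP ((f (r i) : Matrix (Fin d) (Fin d) ℂ)) ((f (r k) : Matrix (Fin d) (Fin d) ℂ)) := by
    rw [hsInner_eq_KIP, coe_combo, KIP_combo]
  have hzero : ∑ i, ∑ k, (c i * c k) *
      KIP ((r i : Matrix (Fin d) (Fin d) ℂ)) ((r k : Matrix (Fin d) (Fin d) ℂ)) = 0 := by
    rw [← KIP_combo]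
    have h0' : ∑ i, c i • (r i : Matrix (Fin d) (Fin d) ℂ) = 0 := by
      rw [← coe_combo, h0]
      rfl
    rw [h0', KIP_zero_left]
  have hle : hsInner (∑ i, c i • f (r i)) (∑ i, c i • f (r i)) ≤ ε * (∑ i, |c i|) ^ 2 := by
    rw [hM]
    have step : ∀ i k, (c i * c k) *
        KIP ((f (r i) : Matrix (Fin d) (Fin d) ℂ)) ((f (r k) : Matrix (Fin d) (Fin d) ℂ))
        ≤ (c i * c k) * KIP ((r i : Matrix (Fin d) (Fin d) ℂ)) ((r k : Matrix (Fin d) (Fin d) ℂ))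
          + |c i| * |c k| * ε := by
      intro i k
      have hd' : |KIP ((f (r i) : Matrix (Fin d) (Fin d) ℂ))
          ((f (r k) : Matrix (Fin d) (Fin d) ℂ))
          - KIP ((r i : Matrix (Fin d) (Fin d) ℂ)) ((r k : Matrix (Fin d) (Fin d) ℂ))| ≤ ε :=
        hsym (r i) (hr i) (r k) (hr k)
      have habs : |(c i * c k) * (KIP ((f (r i) : Matrix (Fin d) (Fin d) ℂ))
          ((f (r k) : Matrix (Fin d) (Fin d) ℂ))
          - KIP ((r i : Matrix (Fin d) (Fin d) ℂ)) ((r k : Matrix (Fin d) (Fin d) ℂ)))|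
          ≤ |c i| * |c k| * ε := by
        rw [abs_mul, abs_mul]
        exact mul_le_mul_of_nonneg_left hd' (by positivity)
      have h1 := (le_abs_self _).trans habs
      nlinarith [h1]
    calc ∑ i, ∑ k, (c i * c k) *
        KIP ((f (r i) : Matrix (Fin d) (Fin d) ℂ)) ((f (r k) : Matrix (Fin d) (Fin d) ℂ))
        ≤ ∑ i, ∑ k, ((c i * c k) * KIP ((r i : Matrix (Fin d) (Fin d) ℂ))
            ((r k : Matrix (Fin d) (Fin d) ℂ)) + |c i| * |c k| * ε) := by
          exact Finset.sum_le_sum fun i _ => Finset.sum_le_sum fun k _ => step i k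
      _ = ε * (∑ i, |c i|) ^ 2 := by
          simp only [Finset.sum_add_distrib]
          rw [hzero, zero_add]
          have hinner : ∀ i : ι, ∑ k, |c i| * |c k| * ε = |c i| * ((∑ k, |c k|) * ε) := by
            intro i
            rw [Finset.sum_mul, Finset.mul_sum]
            refine Finset.sum_congr rfl fun k _ => ?_
            ring
          rw [Finset.sum_congr rfl fun i _ => hinner i, ← Finset.sum_mul]
          ring
  rw [hsNorm]
  calc Real.sqrt (hsInner (∑ i, c i • f (r i)) (∑ i, c i • f (r i)))
      ≤ Real.sqrt (ε * (∑ i, |c i|) ^ 2) := Real.sqrt_le_sqrt hle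
    _ = Real.sqrt ε * ∑ i, |c i| := by
        rw [Real.sqrt_mul hε.le, Real.sqrt_sq (Finset.sum_nonneg fun i _ => abs_nonneg _)]

end Stmt18Aux
namespace Stmt18Aux
variable {d : ℕ}

lemma smul_eq_smul {a b : ℝ} {y : HermMat d} (hy : y ≠ 0) (h : a • y = b • y) : a = b := by
  by_contra hab
  have h2 : (a - b) • y = 0 := by rw [sub_smul, h, sub_self]
  have h3 : y = 0 := by
    have h4 := congrArg (fun w : HermMat d => (a - b)⁻¹ • w) h2
    simpa [smul_smul, inv_mul_cancel₀ (sub_ne_zero.mpr hab)] using h4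
  exact hy h3

lemma smul_cancel {a : ℝ} (ha : a ≠ 0) {y z : HermMat d} (h : a • y = a • z) : y = z := by
  have h4 := congrArg (fun w : HermMat d => a⁻¹ • w) h
  simpa [smul_smul, inv_mul_cancel₀ ha] using h4

def IsConic (x : HermMat d) : Prop :=
  ∃ p, p ∈ rankOneProjSet d ∧ ∃ c : ℝ, c ≠ 0 ∧ x = c • p

lemma conic_smul {x : HermMat d} {c : ℝ} (hc : c ≠ 0) (h : IsConic x) : IsConic (c • x) := by
  obtain ⟨p, hp, a, ha, rfl⟩ := h
  exact ⟨p, hp, c * a, mul_ne_zero hc ha, smul_smul c a p⟩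

lemma conic_unique {x p q : HermMat d} (hp : p ∈ rankOneProjSet d)
    (hq : q ∈ rankOneProjSet d) {a b : ℝ} (ha : a ≠ 0)
    (hxa : x = a • p) (hxb : x = b • q) : p = q := by
  have h := hxa.symm.trans hxb
  have htr : trR (a • p) = trR (b • q) := by rw [h]
  rw [trR_smul, trR_smul, trR_proj hp, trR_proj hq, mul_one, mul_one] at htr
  subst htr
  exact smul_cancel ha h

open Classical in
noncomputable def lineRep (x : HermMat d) : HermMat d :=
  if h : ∃ y : HermMat d, y ∈ Submodule.span ℝ ({x} : Set (HermMat d)) ∧ y ≠ 0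
  then h.choose else 0

open Classical in
noncomputable def rep (x : HermMat d) : HermMat d :=
  if h : IsConic x then h.choose else lineRep x

lemma rep_conic {x : HermMat d} (h : IsConic x) :
    rep x ∈ rankOneProjSet d ∧ ∃ c : ℝ, c ≠ 0 ∧ x = c • rep x := by
  rw [rep, dif_pos h]
  exact ⟨h.choose_spec.1, h.choose_spec.2⟩

lemma lineRep_spec {x : HermMat d} (hx : x ≠ 0) :
    lineRep x ∈ Submodule.span ℝ ({x} : Set (HermMat d)) ∧ lineRep x ≠ 0 := by
  have h : ∃ y : HermMat d, y ∈ Submodule.span ℝ ({x} : Set (HermMat d)) ∧ y ≠ 0 :=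
    ⟨x, Submodule.mem_span_singleton_self x, hx⟩
  rw [lineRep, dif_pos h]
  exact h.choose_spec

lemma rep_spec (x : HermMat d) : ∃ c : ℝ, x = c • rep x := by
  by_cases hx : x = 0
  · exact ⟨0, by rw [hx, zero_smul]⟩
  by_cases h : IsConic x
  · obtain ⟨c, hc, hxc⟩ := (rep_conic h).2
    exact ⟨c, hxc⟩
  · rw [rep, dif_neg h]
    obtain ⟨hmem, hne⟩ := lineRep_spec hx
    rw [Submodule.mem_span_singleton] at hmem
    obtain ⟨a, ha⟩ := hmem
    have ha0 : a ≠ 0 := by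
      intro h0
      rw [h0, zero_smul] at ha
      exact hne ha.symm
    refine ⟨a⁻¹, ?_⟩
    rw [← ha, smul_smul, inv_mul_cancel₀ ha0, one_smul]

lemma rep_ne_zero {x : HermMat d} (hx : x ≠ 0) : rep x ≠ 0 := by
  by_cases h : IsConic x
  · exact proj_ne_zero (rep_conic h).1
  · rw [rep, dif_neg h]
    exact (lineRep_spec hx).2

lemma conic_smul_iff {x : HermMat d} {c : ℝ} (hc : c ≠ 0) :
    IsConic (c • x) ↔ IsConic x := by
  constructor
  · intro h
    have h2 := conic_smul (inv_ne_zero hc) h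
    rwa [smul_smul, inv_mul_cancel₀ hc, one_smul] at h2
  · exact conic_smul hc

lemma rep_smul {x : HermMat d} {c : ℝ} (hc : c ≠ 0) : rep (c • x) = rep x := by
  by_cases hx : x = 0
  · rw [hx, smul_zero]
  by_cases h : IsConic x
  · have h2 : IsConic (c • x) := conic_smul hc h
    obtain ⟨hq, b, hb, hxb⟩ := rep_conic h2
    obtain ⟨hp, a, ha, hxa⟩ := rep_conic h
    have hxa' : c • x = (c * a) • rep x := by
      rw [mul_smul]
      exact congrArg (fun w : HermMat d => c • w) hxa
    exact conic_unique hq hp hb hxb hxa'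
  · have h2 : ¬ IsConic (c • x) := fun hcc => h ((conic_smul_iff hc).mp hcc)
    rw [rep, dif_neg h2, rep, dif_neg h]
    have hspan : Submodule.span ℝ ({c • x} : Set (HermMat d))
        = Submodule.span ℝ ({x} : Set (HermMat d)) :=
      Submodule.span_singleton_smul_eq (IsUnit.mk0 c hc) x
    rw [lineRep, lineRep, hspan]

noncomputable def tcoef (x : HermMat d) : ℝ := (rep_spec x).choose

lemma tcoef_spec (x : HermMat d) : x = tcoef x • rep x := (rep_spec x).choose_spec

lemma tcoef_smul {x : HermMat d} (hx : x ≠ 0) {c : ℝ} (hc : c ≠ 0) :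
    tcoef (c • x) = c * tcoef x := by
  have h1 : c • x = tcoef (c • x) • rep x := by
    rw [← rep_smul hc (x := x)]
    exact tcoef_spec (c • x)
  have h2 : c • x = (c * tcoef x) • rep x := by
    rw [mul_smul]
    exact congrArg (fun w : HermMat d => c • w) (tcoef_spec x)
  exact (smul_eq_smul (rep_ne_zero hx) (h1.symm.trans h2))

lemma rep_proj {p : HermMat d} (hp : p ∈ rankOneProjSet d) : rep p = p := by
  have h : IsConic p := ⟨p, hp, 1, one_ne_zero, (one_smul ℝ p).symm⟩
  obtain ⟨hq, b, hb, hxb⟩ := rep_conic h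
  exact conic_unique hq hp hb hxb (one_smul ℝ p).symm

lemma tcoef_proj {p : HermMat d} (hp : p ∈ rankOneProjSet d) : tcoef p = 1 := by
  have h1 : p = tcoef p • p := by
    conv_lhs => rw [tcoef_spec p]
    rw [rep_proj hp]
  exact smul_eq_smul (proj_ne_zero hp) (h1.symm.trans (one_smul ℝ p).symm)

end Stmt18Aux
namespace Stmt18Aux
variable {d : ℕ}

lemma spectralH (x : HermMat d) : ∑ j, muv x j • Pj x j = x := by
  apply Subtype.ext
  rw [coe_combo]
  exact (spectral_decomp x).symm

lemma muv_zero (j : Fin d) : muv (0 : HermMat d) j = 0 := by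
  rw [← muv_eq]
  have h : ((0 : HermMat d) : Matrix (Fin d) (Fin d) ℂ) = 0 := rfl
  rw [h, KIP_zero_left]

open Classical in
noncomputable def G (f : HermMat d → HermMat d) (u : HermMat d) : HermMat d :=
  if u ∈ rankOneProjSet d then f u else ∑ j, muv u j • f (Pj u j)

noncomputable def Fm (f : HermMat d → HermMat d) (x : HermMat d) : HermMat d :=
  tcoef x • G f (rep x)

lemma G_zero (f : HermMat d → HermMat d) : G f 0 = 0 := by
  rw [G, if_neg (fun h => proj_ne_zero h rfl)]
  rw [Finset.sum_congr rfl fun j (_ : j ∈ Finset.univ) => by rw [muv_zero j, zero_smul]]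
  exact Finset.sum_const_zero

lemma rep_zero : rep (0 : HermMat d) = 0 := by
  have h : ¬ IsConic (0 : HermMat d) := by
    rintro ⟨p, hp, c, hc, h0⟩
    exact proj_ne_zero hp (smul_cancel hc (h0.symm.trans (smul_zero c).symm))
  rw [rep, dif_neg h]
  have h2 : ¬ ∃ y : HermMat d, y ∈ Submodule.span ℝ ({(0 : HermMat d)} : Set (HermMat d)) ∧ y ≠ 0 := by
    rintro ⟨y, hy, hy0⟩
    rw [Submodule.span_zero_singleton] at hy
    exact hy0 hy
  rw [lineRep, dif_neg h2]

lemma Fm_zero (f : HermMat d → HermMat d) : Fm f 0 = 0 := by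
  rw [Fm, rep_zero, G_zero, smul_zero]

lemma Fm_proj (f : HermMat d → HermMat d) {p : HermMat d} (hp : p ∈ rankOneProjSet d) :
    Fm f p = f p := by
  rw [Fm, rep_proj hp, tcoef_proj hp, G, if_pos hp, one_smul]

lemma Fm_smul (f : HermMat d → HermMat d) (c : ℝ) (x : HermMat d) :
    Fm f (c • x) = c • Fm f x := by
  by_cases hx : x = 0
  · rw [hx, smul_zero, Fm_zero, smul_zero]
  by_cases hc : c = 0
  · rw [hc, zero_smul, Fm_zero, zero_smul]
  · rw [Fm, Fm, rep_smul hc, tcoef_smul hx hc, mul_smul]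

/-- the decomposition underlying `Fm` -/
lemma decomp (hd : 1 ≤ d) (f : HermMat d → HermMat d) (x : HermMat d) :
    ∃ (w : Fin d → ℝ) (r : Fin d → HermMat d),
      (∀ j, r j ∈ rankOneProjSet d) ∧ (∑ j, w j • r j = x) ∧ (∑ j, |w j| ≤ trNorm x)
      ∧ Fm f x = ∑ j, w j • f (r j) := by
  have hx := tcoef_spec x
  by_cases hu : rep x ∈ rankOneProjSet d
  · set t := tcoef x with ht
    set u := rep x with hu'
    have j0 : Fin d := ⟨0, hd⟩
    refine ⟨fun j => if j = (⟨0, hd⟩ : Fin d) then t else 0, fun _ => u, fun _ => hu, ?_, ?_, ?_⟩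
    · rw [← Finset.sum_smul]
      have hsum : ∑ j, (if j = (⟨0, hd⟩ : Fin d) then t else 0) = t := by simp
      rw [hsum]
      exact hx.symm
    · have hsum : ∑ j, |if j = (⟨0, hd⟩ : Fin d) then t else 0| = |t| := by
        have : ∀ j : Fin d, |if j = (⟨0, hd⟩ : Fin d) then t else 0|
            = if j = (⟨0, hd⟩ : Fin d) then |t| else 0 := by
          intro j; split <;> simp
        rw [Finset.sum_congr rfl fun j _ => this j]
        simp
      rw [hsum]
      have htr : trR x = t := by rw [hx, trR_smul, trR_proj hu, mul_one]
      calc |t| = |trR x| := by rw [htr]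
        _ ≤ trNorm x := abs_trR_le x
    · rw [Fm, G, if_pos hu, ← hu', ← ht]
      have hsum : ∑ j, (if j = (⟨0, hd⟩ : Fin d) then t else 0) • f u = t • f u := by
        rw [← Finset.sum_smul]
        have : ∑ j, (if j = (⟨0, hd⟩ : Fin d) then t else 0) = t := by simp
        rw [this]
      rw [hsum]
  · set t := tcoef x with ht
    set u := rep x with hu'
    refine ⟨fun j => t * muv u j, fun j => Pj u j, fun j => Pj_mem u j, ?_, ?_, ?_⟩
    · have : ∑ j, (t * muv u j) • Pj u j = t • ∑ j, muv u j • Pj u j := by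
        rw [Finset.smul_sum]
        exact Finset.sum_congr rfl fun j _ => mul_smul t (muv u j) (Pj u j)
      rw [this, spectralH]
      exact hx.symm
    · by_cases htz : t = 0
      · have : ∑ j, |t * muv u j| = 0 := by simp [htz]
        rw [this]
        exact trNorm_nonneg x
      · have h1 : ∑ j, |t * muv u j| = |t| * trNorm u := by
          rw [trNorm_eq, Finset.mul_sum]
          exact Finset.sum_congr rfl fun j _ => abs_mul t (muv u j)
        rw [h1]
        have hu_dec : ∑ k, (t⁻¹ * muv x k) • Pj x k = u := by
          have : ∑ k, (t⁻¹ * muv x k) • Pj x k = t⁻¹ • ∑ k, muv x k • Pj x k := by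
            rw [Finset.smul_sum]
            exact Finset.sum_congr rfl fun k _ => mul_smul t⁻¹ (muv x k) (Pj x k)
          rw [this, spectralH]
          rw [hx, smul_smul, inv_mul_cancel₀ htz, one_smul]
        have h2 := trNorm_le_of_decomp (fun k => t⁻¹ * muv x k) (fun k => Pj x k)
          (fun k => Pj_mem x k) u hu_dec
        have h3 : ∑ k, |t⁻¹ * muv x k| = |t|⁻¹ * trNorm x := by
          rw [trNorm_eq, Finset.mul_sum]
          refine Finset.sum_congr rfl fun k _ => ?_
          rw [abs_mul, abs_inv]
        rw [h3] at h2
        calc |t| * trNorm u ≤ |t| * (|t|⁻¹ * trNorm x) :=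
              mul_le_mul_of_nonneg_left h2 (abs_nonneg t)
          _ = trNorm x := by
              rw [← mul_assoc, mul_inv_cancel₀ (abs_ne_zero.mpr htz), one_mul]
    · rw [Fm, G, if_neg hu, ← hu', ← ht, Finset.smul_sum]
      exact Finset.sum_congr rfl fun j _ => (mul_smul t (muv u j) (f (Pj u j))).symm

end Stmt18Aux

open Stmt18Aux

theorem stmt18 (d : ℕ) (hd : 1 ≤ d) (ε : ℝ) (hε : 0 < ε)
    (f : HermMat d → HermMat d)
    (hmap : ∀ p ∈ rankOneProjSet d, f p ∈ rankOneProjSet d)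
    (hsym : ∀ p ∈ rankOneProjSet d, ∀ q ∈ rankOneProjSet d,
      |hsInner (f p) (f q) - hsInner p q| ≤ ε) :
    ∃ F : HermMat d → HermMat d,
      (∀ p ∈ rankOneProjSet d, F p = f p) ∧
      (∀ (c : ℝ) (x : HermMat d), F (c • x) = c • F x) ∧
      (∀ (m : ℕ) (x : Fin m → HermMat d) (l : Fin m → ℝ),
        hsNorm ((∑ i, l i • F (x i)) - F (∑ i, l i • x i)) ≤
          2 * Real.sqrt ε * ∑ i, |l i| * trNorm (x i)) := by
  classical
  refine ⟨Fm f, fun p hp => Fm_proj f hp, fun c x => Fm_smul f c x, ?_⟩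
  intro m x l
  have hdec := fun i => decomp hd f (x i)
  choose w r hrm hsum hwle hF using hdec
  obtain ⟨W, R, hRm, hSsum, hWle, hFs⟩ := decomp hd f (∑ i, l i • x i)
  set cc : (Fin m × Fin d) ⊕ Fin d → ℝ :=
    Sum.elim (fun ij => l ij.1 * w ij.1 ij.2) (fun k => -W k) with hcc
  set rr : (Fin m × Fin d) ⊕ Fin d → HermMat d :=
    Sum.elim (fun ij => r ij.1 ij.2) R with hrr
  have hrmem : ∀ a, rr a ∈ rankOneProjSet d := by
    rintro (⟨i, j⟩ | k)
    · exact hrm i j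
    · exact hRm k
  have hfirst : ∑ ij : Fin m × Fin d, (l ij.1 * w ij.1 ij.2) • r ij.1 ij.2
      = ∑ i, l i • x i := by
    rw [Fintype.sum_prod_type]
    refine Finset.sum_congr rfl fun i _ => ?_
    dsimp only
    rw [← hsum i, Finset.smul_sum]
    exact Finset.sum_congr rfl fun j _ => mul_smul (l i) (w i j) (r i j)
  have h0 : ∑ a, cc a • rr a = (0 : HermMat d) := by
    rw [Fintype.sum_sum_type]
    have h1 : ∑ ij : Fin m × Fin d, cc (Sum.inl ij) • rr (Sum.inl ij) = ∑ i, l i • x i := by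
      simp only [hcc, hrr, Sum.elim_inl]
      exact hfirst
    have h2 : ∑ k, cc (Sum.inr k) • rr (Sum.inr k) = -(∑ i, l i • x i) := by
      simp only [hcc, hrr, Sum.elim_inr]
      rw [← hSsum, ← Finset.sum_neg_distrib]
      exact Finset.sum_congr rfl fun k _ => neg_smul (W k) (R k)
    rw [h1, h2]
    exact add_neg_cancel _
  have hdiff : (∑ i, l i • Fm f (x i)) - Fm f (∑ i, l i • x i)
      = ∑ a, cc a • f (rr a) := by
    rw [Fintype.sum_sum_type]
    have h1 : ∑ ij : Fin m × Fin d, cc (Sum.inl ij) • f (rr (Sum.inl ij))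
        = ∑ i, l i • Fm f (x i) := by
      simp only [hcc, hrr, Sum.elim_inl]
      rw [Fintype.sum_prod_type]
      refine Finset.sum_congr rfl fun i _ => ?_
      dsimp only
      rw [hF i, Finset.smul_sum]
      exact Finset.sum_congr rfl fun j _ => mul_smul (l i) (w i j) (f (r i j))
    have h2 : ∑ k, cc (Sum.inr k) • f (rr (Sum.inr k)) = -(Fm f (∑ i, l i • x i)) := by
      simp only [hcc, hrr, Sum.elim_inr]
      rw [hFs, ← Finset.sum_neg_distrib]
      exact Finset.sum_congr rfl fun k _ => neg_smul (W k) (f (R k))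
    rw [h1, h2, ← sub_eq_add_neg]
  rw [hdiff]
  refine (key_bound ε hε f hsym cc rr hrmem h0).trans ?_
  have hccsum : ∑ a, |cc a|
      = (∑ ij : Fin m × Fin d, |l ij.1 * w ij.1 ij.2|) + ∑ k, |W k| := by
    rw [Fintype.sum_sum_type]
    simp only [hcc, Sum.elim_inl, Sum.elim_inr, abs_neg]
  have hA : ∑ ij : Fin m × Fin d, |l ij.1 * w ij.1 ij.2| ≤ ∑ i, |l i| * trNorm (x i) := by
    rw [Fintype.sum_prod_type]
    refine Finset.sum_le_sum fun i _ => ?_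
    have habs : ∑ j, |l i * w i j| = |l i| * ∑ j, |w i j| := by
      rw [Finset.mul_sum]
      exact Finset.sum_congr rfl fun j _ => abs_mul (l i) (w i j)
    rw [habs]
    exact mul_le_mul_of_nonneg_left (hwle i) (abs_nonneg _)
  have hB : ∑ k, |W k| ≤ ∑ i, |l i| * trNorm (x i) := by
    have hs : trNorm (∑ i, l i • x i) ≤ ∑ ij : Fin m × Fin d, |l ij.1 * w ij.1 ij.2| :=
      trNorm_le_of_decomp _ _ (fun ij => hrm ij.1 ij.2) _ hfirst
    exact hWle.trans (hs.trans hA)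
  have h2T : ∑ a, |cc a| ≤ 2 * ∑ i, |l i| * trNorm (x i) := by
    rw [hccsum]
    linarith
  calc Real.sqrt ε * ∑ a, |cc a|
      ≤ Real.sqrt ε * (2 * ∑ i, |l i| * trNorm (x i)) :=
        mul_le_mul_of_nonneg_left h2T (Real.sqrt_nonneg ε)
    _ = 2 * Real.sqrt ε * ∑ i, |l i| * trNorm (x i) := by ring
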